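/- Let α be an arbitrary type and let F be a finite type (finitely many truth values). Let 𝒜 be a family of subsets of (α → F) such that every A ∈ 𝒜 is nonempty, the members of 𝒜 are pairwise disjoint, and every A ∈ 𝒜 is determined by finitely many coordinates (there is a finite S ⊆ α with: for all v, w : α → F, if v p = w p for every p ∈ S then v ∈ A ↔ w ∈ A). Then 𝒜 is countable. -/

import Mathlib

open Finset in
private lemma key_card_bound {α F : Type*} [Fintype F] [Nonempty F] (n : ℕ)
    (T : Finset (Set (α → F)))
    (hne : ∀ A ∈ T, (A : Set (α → F)).Nonempty)
    (hdisj : ∀ A ∈ T, ∀ B ∈ T, A ≠ B → Disjoint A B)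
    (hdet : ∀ A ∈ T, ∃ S : Finset α, S.card ≤ n ∧
      ∀ v w : α → F, (∀ p ∈ S, v p = w p) → (v ∈ A ↔ w ∈ A)) :
    T.card ≤ Fintype.card F ^ n := by
  classical
  set q := Fintype.card F with hq
  have hq1 : 1 ≤ q := Fintype.card_pos
  let S : Set (α → F) → Finset α := fun A => if h : A ∈ T then (hdet A h).choose else ∅
  have hScard : ∀ A ∈ T, (S A).card ≤ n := by
    intro A hA; simp only [S, dif_pos hA]; exact (hdet A hA).choose_spec.1
  have hSdet : ∀ A ∈ T, ∀ v w : α → F, (∀ p ∈ S A, v p = w p) → (v ∈ A ↔ w ∈ A) := by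
    intro A hA; simp only [S, dif_pos hA]; exact (hdet A hA).choose_spec.2
  let U : Finset α := T.sup S
  have hSU : ∀ A ∈ T, S A ⊆ U := fun A hA => Finset.le_sup hA
  let res : (α → F) → (↥U → F) := fun v i => v i
  let π : Set (α → F) → Finset (↥U → F) := fun A => (Set.toFinite (res '' A)).toFinset
  have hmem : ∀ A g, g ∈ π A ↔ ∃ v ∈ A, res v = g := by
    intro A g; simp [π, Set.Finite.mem_toFinset]
  -- lower bound on each π A
  have hlow : ∀ A ∈ T, q ^ U.card ≤ (π A).card * q ^ n := by
    intro A hA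
    obtain ⟨v, hv⟩ := hne A hA
    set s := S A with hs
    set Fb : Finset (↥U → F) :=
      Finset.univ.filter (fun h : ↥U → F => ∀ i : ↥U, (i : α) ∈ s → h i = v i) with hFbdef
    -- injection from functions on U \ s into Fb
    let φ : ((↥(U \ s)) → F) → (↥U → F) := fun k i =>
      if hi : (i : α) ∈ s then v i else k ⟨i, Finset.mem_sdiff.mpr ⟨i.2, hi⟩⟩
    have hinj : Function.Injective φ := by
      intro k k' hkk'
      funext j
      have hj := Finset.mem_sdiff.mp j.2
      have h1 := congrFun hkk' ⟨j.1, hj.1⟩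
      simpa [φ, dif_neg hj.2] using h1
    have hφmem : ∀ k, φ k ∈ Fb := by
      intro k
      simp only [hFbdef, Finset.mem_filter, Finset.mem_univ, true_and]
      intro i hi
      simp [φ, dif_pos hi]
    have hcard1 : q ^ (U.card - s.card) ≤ Fb.card := by
      have := Finset.card_le_card_of_injOn (s := Finset.univ) φ (fun k _ => hφmem k) hinj.injOn
      calc q ^ (U.card - s.card) = Fintype.card ((↥(U \ s)) → F) := by
            rw [Fintype.card_fun, Fintype.card_coe, Finset.card_sdiff_of_subset (hSU A hA)]
        _ = (Finset.univ : Finset ((↥(U \ s)) → F)).card := Finset.card_univ.symm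
        _ ≤ Fb.card := this
    have hFb : Fb ⊆ π A := by
      intro h hh
      simp only [hFbdef, Finset.mem_filter, Finset.mem_univ, true_and] at hh
      set w : α → F := fun p => if hp : p ∈ U then h ⟨p, hp⟩ else v p with hw
      have hagree : ∀ p ∈ s, v p = w p := by
        intro p hp
        have hpU : p ∈ U := hSU A hA hp
        simp only [hw, dif_pos hpU]
        exact (hh ⟨p, hpU⟩ hp).symm
      have hwA : w ∈ A := (hSdet A hA v w hagree).mp hv
      have hres : res w = h := by
        funext i
        simp only [res, hw, dif_pos i.2]
      exact (hmem A h).mpr ⟨w, hwA, hres⟩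
    have hsn : s.card ≤ U.card := Finset.card_le_card (hSU A hA)
    calc q ^ U.card = q ^ (U.card - s.card) * q ^ s.card := by
          rw [← pow_add, Nat.sub_add_cancel hsn]
      _ ≤ (π A).card * q ^ n :=
          Nat.mul_le_mul (hcard1.trans (Finset.card_le_card hFb))
            (Nat.pow_le_pow_right hq1 (hScard A hA))
  -- pairwise disjointness of π A
  have hdisjπ : ∀ A ∈ T, ∀ B ∈ T, A ≠ B → Disjoint (π A) (π B) := by
    intro A hA B hB hAB
    rw [Finset.disjoint_left]
    intro g hgA hgB
    obtain ⟨v, hv, rfl⟩ := (hmem A g).mp hgA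
    obtain ⟨w, hw, hwg⟩ := (hmem B _).mp hgB
    have hvB : v ∈ B := by
      refine (hSdet B hB v w ?_).mpr hw
      intro p hp
      have hpU : p ∈ U := hSU B hB hp
      have := congrFun hwg ⟨p, hpU⟩
      exact this.symm
    exact Set.disjoint_left.mp (hdisj A hA B hB hAB) hv hvB
  have hsum : ∑ A ∈ T, (π A).card ≤ q ^ U.card := by
    rw [← Finset.card_biUnion hdisjπ]
    calc (T.biUnion π).card ≤ Fintype.card (↥U → F) := Finset.card_le_univ _
      _ = q ^ U.card := by rw [Fintype.card_fun, Fintype.card_coe]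
  have hmain : T.card * q ^ U.card ≤ q ^ n * q ^ U.card := by
    calc T.card * q ^ U.card = ∑ _A ∈ T, q ^ U.card := by
          rw [Finset.sum_const, smul_eq_mul]
      _ ≤ ∑ A ∈ T, (π A).card * q ^ n := Finset.sum_le_sum hlow
      _ = (∑ A ∈ T, (π A).card) * q ^ n := (Finset.sum_mul ..).symm
      _ ≤ q ^ U.card * q ^ n := Nat.mul_le_mul_right _ hsum
      _ = q ^ n * q ^ U.card := mul_comm _ _
  exact Nat.le_of_mul_le_mul_right hmain (Nat.pow_pos hq1)

/-- Generalization to finitely many truth values: any family of nonempty, pairwise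
disjoint subsets of `α → F` (`F` a finite type), each determined by finitely many
coordinates, is countable. -/
theorem countable_of_pairwise_disjoint_finitely_determined_finite_values
    {α F : Type*} [Finite F] (𝒜 : Set (Set (α → F)))
    (hne : ∀ A ∈ 𝒜, A.Nonempty)
    (hdisj : 𝒜.Pairwise fun A B => Disjoint A B)
    (hfin : ∀ A ∈ 𝒜, ∃ S : Finset α,
      ∀ v w : α → F, (∀ p ∈ S, v p = w p) → (v ∈ A ↔ w ∈ A)) :
    𝒜.Countable := by
  classical
  cases isEmpty_or_nonempty F with
  | inl h =>
    have hsub : 𝒜.Subsingleton := by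
      intro A hA B hB
      by_contra hAB
      obtain ⟨v, hv⟩ := hne A hA
      obtain ⟨w, hw⟩ := hne B hB
      have hvw : v = w := funext fun a => (h.elim (v a))
      exact Set.disjoint_left.mp (hdisj hA hB hAB) hv (hvw ▸ hw)
    exact hsub.countable
  | inr h =>
    have : Fintype F := Fintype.ofFinite F
    have hcov : 𝒜 = ⋃ n : ℕ, {A ∈ 𝒜 | ∃ S : Finset α, S.card ≤ n ∧
        ∀ v w : α → F, (∀ p ∈ S, v p = w p) → (v ∈ A ↔ w ∈ A)} := by
      ext A
      simp only [Set.mem_iUnion, Set.mem_setOf_eq]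
      constructor
      · intro hA
        obtain ⟨S, hS⟩ := hfin A hA
        exact ⟨S.card, hA, S, le_refl _, hS⟩
      · rintro ⟨n, hA, _⟩; exact hA
    rw [hcov]
    apply Set.countable_iUnion
    intro n
    apply Set.Finite.countable
    by_contra hinf
    obtain ⟨T, hTsub, hTcard⟩ :=
      Set.Infinite.exists_subset_card_eq hinf (Fintype.card F ^ n + 1)
    have hb := key_card_bound n T (fun A hA => hne A (hTsub hA).1)
      (fun A hA B hB hAB => hdisj (hTsub hA).1 (hTsub hB).1 hAB)
      (fun A hA => (hTsub hA).2)
    omega
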